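/- Let q be a positive integer and G a finite simple graph on m vertices such that q > |N²(v)| + 2|N(v)| for every vertex v of G, where N(v) is the open neighborhood of v and N²(v) is the set of vertices at distance exactly two from v. Then G □ K_q is VD_m. -/

import Mathlib

/-- The closed neighborhood `N•(v) = N(v) ∪ {v}` of a vertex, as a `Finset`. -/
def SimpleGraph.closedNbhdFinset {V : Type*} [Fintype V] [DecidableEq V] (G : SimpleGraph V)
    [DecidableRel G.Adj] (v : V) : Finset V :=
  insert v (G.neighborFinset v)

/-- `VD G s k` means that the induced subgraph of `G` on the vertex set `s` has the
graph property `VD_k`: every (induced sub)graph is `VD_0`; a graph with exactly `k`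
vertices and no edges is `VD_k`; and if there is a vertex `v` such that deleting `v`
yields a `VD_k` graph and deleting the closed neighborhood of `v` yields a `VD_{k-1}`
graph, then the graph is `VD_k`. -/
inductive SimpleGraph.VD {V : Type*} [Fintype V] [DecidableEq V] (G : SimpleGraph V)
    [DecidableRel G.Adj] : Finset V → ℕ → Prop
  | zero (s : Finset V) : SimpleGraph.VD G s 0
  | edgeless (s : Finset V) (k : ℕ) (hcard : s.card = k)
      (h : ∀ u ∈ s, ∀ w ∈ s, ¬ G.Adj u w) : SimpleGraph.VD G s k
  | step (s : Finset V) (k : ℕ) (v : V) (hv : v ∈ s)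
      (hdel : SimpleGraph.VD G (s.erase v) (k + 1))
      (hnbr : SimpleGraph.VD G (s \ G.closedNbhdFinset v) k) : SimpleGraph.VD G s (k + 1)


instance boxProdDecidableAdj {V W : Type*} (G : SimpleGraph V) (H : SimpleGraph W)
    [DecidableRel G.Adj] [DecidableRel H.Adj] [DecidableEq V] [DecidableEq W] :
    DecidableRel (G □ H).Adj := fun x y =>
  decidable_of_iff (G.Adj x.1 y.1 ∧ x.2 = y.2 ∨ H.Adj x.2 y.2 ∧ x.1 = y.1) Iff.rfl

/-- A squid with body `w` in `G □ K_q` is a subset of `V(G) × Fin q` that is either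
(i) a subset of `(N°(v) ∪ N°(w)) × {i} ∪ {w} × Fin q` for some vertex `v` adjacent to `w`
and some `i`, or (ii) a subset of `N°(w) × {i, j} ∪ {w} × Fin q` for some `i < j`. -/
def IsSquid {V : Type*} [Fintype V] [DecidableEq V] (G : SimpleGraph V) [DecidableRel G.Adj]
    (q : ℕ) (w : V) (S : Finset (V × Fin q)) : Prop :=
  (∃ (v : V) (i : Fin q), G.Adj v w ∧
      S ⊆ ((G.neighborFinset v ∪ G.neighborFinset w) ×ˢ {i}) ∪ ({w} ×ˢ Finset.univ)) ∨
  (∃ i j : Fin q, i < j ∧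
      S ⊆ (G.neighborFinset w ×ˢ ({i, j} : Finset (Fin q))) ∪ ({w} ×ˢ Finset.univ))

/-- The vertices of `G □ K_q` remaining after deleting the squids in the list `L`. -/
def remaining {V : Type*} [Fintype V] [DecidableEq V] (q : ℕ)
    (L : List (Finset (V × Fin q))) : Finset (V × Fin q) :=
  Finset.univ \ L.foldr (· ∪ ·) ∅

/-- The open neighborhood of `x` in the induced subgraph `H` of `G □ K_q` on the
vertices remaining after deleting the squids in `L`. -/
def NbhdH {V : Type*} [Fintype V] [DecidableEq V] (G : SimpleGraph V) [DecidableRel G.Adj]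
    (q : ℕ) (L : List (Finset (V × Fin q))) (x : V × Fin q) : Finset (V × Fin q) :=
  (remaining q L).filter (fun y => (G □ (⊤ : SimpleGraph (Fin q))).Adj x y)

/-- A DF-algorithm for the graph `G` and `K_q`: a set of DF-tuples (each recorded as the
list of its squids together with the bound `m`) and a map `move` picking a vertex of the
remaining graph, such that adjoining any squid contained in the neighborhoods described in
(a) or (b) again gives a member of the set. -/
structure DFAlgorithm (V : Type*) [Fintype V] [DecidableEq V] (G : SimpleGraph V)
    [DecidableRel G.Adj] (q : ℕ) where
  tuples : Set (List (Finset (V × Fin q)) × ℕ)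
  move : List (Finset (V × Fin q)) × ℕ → V × Fin q
  q_pos : 0 < q
  valid : ∀ T ∈ tuples, T.1.length ≤ T.2 ∧ T.2 ≤ Fintype.card V ∧
    ∀ S ∈ T.1, ∃ w : V, IsSquid G q w S
  move_mem : ∀ T ∈ tuples, T.1.length < T.2 → move T ∈ remaining q T.1
  extend : ∀ T ∈ tuples, T.1.length < T.2 →
    ∀ S : Finset (V × Fin q), (∃ w : V, IsSquid G q w S) →
    ((∃ j : Fin q, ((move T).1, j) ∈ remaining q T.1 ∧
        S ⊆ NbhdH G q T.1 (move T) ∪ NbhdH G q T.1 ((move T).1, j)) ∨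
     (∃ u : V, G.Adj (move T).1 u ∧ (u, (move T).2) ∈ remaining q T.1 ∧
        S ⊆ (NbhdH G q T.1 (move T)).filter (fun y => y.2 = (move T).2) ∪
            NbhdH G q T.1 (u, (move T).2))) →
    (S :: T.1, T.2) ∈ tuples

set_option linter.unusedSectionVars false

namespace VDP
open Finset SimpleGraph

variable {V : Type*} [Fintype V] [DecidableEq V]

def S {q : ℕ} (R : V → Finset (Fin q)) : Finset (V × Fin q) :=
  Finset.univ.filter fun p => p.2 ∈ R p.1

def alv {q : ℕ} (R : V → Finset (Fin q)) : Finset V :=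
  Finset.univ.filter fun u => R u ≠ ∅

@[simp] lemma mem_S {q : ℕ} {R : V → Finset (Fin q)} {p : V × Fin q} :
    p ∈ S R ↔ p.2 ∈ R p.1 := by simp [S]

@[simp] lemma mem_alv {q : ℕ} {R : V → Finset (Fin q)} {u : V} :
    u ∈ alv R ↔ R u ≠ ∅ := by simp [alv]

variable (G : SimpleGraph V) [DecidableRel G.Adj]

def aN {q : ℕ} (R : V → Finset (Fin q)) (u : V) : Finset V :=
  (G.neighborFinset u).filter fun x => R x ≠ ∅

def dN {q : ℕ} (R : V → Finset (Fin q)) (u : V) : Finset V :=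
  (G.neighborFinset u).filter fun x => R x = ∅

noncomputable def d2N {q : ℕ} (R : V → Finset (Fin q)) (u : V) : Finset V :=
  (Finset.univ.filter fun x => G.dist u x = 2).filter fun x => R x = ∅

def chS {q : ℕ} (R : V → Finset (Fin q)) (c : V → Fin q) (u : V) : Finset (Fin q) :=
  ((aN G R u).image c) \ R u

/-- Phase-I invariant. -/
def INV1 {q : ℕ} (R : V → Finset (Fin q)) (c : V → Fin q) : Prop :=
  (∀ u, R u ≠ ∅ → c u ∈ R u) ∧
  (∀ u x, G.Adj u x → R u ≠ ∅ → R x ≠ ∅ → c u ≠ c x) ∧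
  (∀ u, R u ≠ ∅ →
    q ≤ (R u).card + 2 * (dN G R u).card + (d2N G R u).card + (chS G R c u).card)

/-- Phase-II invariant: conflict-freeness. -/
def INV2 {q : ℕ} (R : V → Finset (Fin q)) (c : V → Fin q) : Prop :=
  (∀ u, R u ≠ ∅ → c u ∈ R u) ∧
  (∀ u x, G.Adj u x → R u ≠ ∅ → R x ≠ ∅ → c x ∉ R u)

/-- Degree hypothesis. -/
def HD (q : ℕ) : Prop := ∀ v : V, ({u : V | G.dist v u = 2} : Set V).ncard + 2 * G.degree v < q

lemma n2_card_eq (u : V) :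
    ({x : V | G.dist u x = 2} : Set V).ncard = (Finset.univ.filter fun x => G.dist u x = 2).card := by
  rw [← Set.ncard_coe_finset]
  congr 1
  ext x
  simp

/-- The key size bound: under INV1 and the degree hypothesis, every alive column has
at least one more row than it has alive neighbours. -/
lemma big {q : ℕ} {R : V → Finset (Fin q)} {c : V → Fin q}
    (hd : HD G q) (h : INV1 G R c) {u : V} (hu : R u ≠ ∅) :
    (aN G R u).card + 1 ≤ (R u).card := by
  have h3 := h.2.2 u hu
  have hdeg : (aN G R u).card + (dN G R u).card = (G.neighborFinset u).card := by
    have h := Finset.card_filter_add_card_filter_not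
      (s := G.neighborFinset u) (p := fun x => R x ≠ ∅)
    simp only [not_not] at h
    simpa [aN, dN] using h
  have h4 : (chS G R c u).card ≤ (aN G R u).card :=
    le_trans (Finset.card_le_card Finset.sdiff_subset) Finset.card_image_le
  have h5 : (d2N G R u).card ≤ (Finset.univ.filter fun x => G.dist u x = 2).card :=
    Finset.card_le_card (Finset.filter_subset _ _)
  have h6 := hd u
  rw [n2_card_eq] at h6
  have h7 : G.degree u = (G.neighborFinset u).card := rfl
  omega

variable {q : ℕ}

lemma prod_adj {p r : V × Fin q} :
    (G □ (⊤ : SimpleGraph (Fin q))).Adj p r ↔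
      (G.Adj p.1 r.1 ∧ p.2 = r.2) ∨ (p.2 ≠ r.2 ∧ p.1 = r.1) := by
  rw [SimpleGraph.boxProd_adj]
  simp [SimpleGraph.top_adj]

lemma S_erase (R : V → Finset (Fin q)) (u : V) (i : Fin q) :
    (S R).erase (u, i) = S (Function.update R u ((R u).erase i)) := by
  ext ⟨x, j⟩
  simp only [Finset.mem_erase, mem_S, Function.update]
  by_cases hx : x = u
  · subst hx
    simp only [Prod.mk.injEq, Ne, not_and]
    simp [Finset.mem_erase, and_comm]
  · simp [hx, Prod.ext_iff]

def killR (R : V → Finset (Fin q)) (u : V) (i : Fin q) : V → Finset (Fin q) :=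
  fun x => if x = u then ∅ else if G.Adj u x then (R x).erase i else R x

lemma mem_cn {u x : V} {i j : Fin q} :
    (x, j) ∈ (G □ (⊤ : SimpleGraph (Fin q))).closedNbhdFinset (u, i) ↔
      x = u ∨ (G.Adj u x ∧ j = i) := by
  simp only [SimpleGraph.closedNbhdFinset, Finset.mem_insert, SimpleGraph.mem_neighborFinset,
    prod_adj, Prod.mk.injEq]
  constructor
  · rintro (⟨hx, hj⟩ | ⟨ha, hj⟩ | ⟨hne, hx⟩)
    · exact Or.inl hx
    · exact Or.inr ⟨ha, hj.symm⟩
    · exact Or.inl hx.symm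
  · rintro (rfl | ⟨ha, rfl⟩)
    · by_cases hj : j = i
      · exact Or.inl ⟨rfl, hj⟩
      · exact Or.inr (Or.inr ⟨fun h => hj h.symm, rfl⟩)
    · exact Or.inr (Or.inl ⟨ha, rfl⟩)

lemma S_sdiff (R : V → Finset (Fin q)) (u : V) (i : Fin q) :
    S R \ (G □ (⊤ : SimpleGraph (Fin q))).closedNbhdFinset (u, i) = S (killR G R u i) := by
  ext ⟨x, j⟩
  rw [Finset.mem_sdiff, mem_cn]
  simp only [mem_S, killR]
  by_cases hx : x = u
  · simp [hx]
  · rw [if_neg hx]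
    by_cases ha : G.Adj u x
    · rw [if_pos ha]
      simp only [Finset.mem_erase, hx, ha, true_and, false_or, not_and]
      tauto
    · simp [hx, ha]

lemma alv_update {R : V → Finset (Fin q)} {u : V} {i : Fin q}
    (h : (R u).erase i ≠ ∅) : alv (Function.update R u ((R u).erase i)) = alv R := by
  have hru : R u ≠ ∅ := fun h0 => h (by simp [h0])
  ext x
  simp only [mem_alv, Function.update]
  by_cases hx : x = u
  · subst hx
    simp only [if_pos rfl]
    tauto
  · simp [hx]

lemma killR_empty_iff {R : V → Finset (Fin q)} {u : V} {i : Fin q}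
    (hs : ∀ x, G.Adj u x → R x ≠ ∅ → (R x).erase i ≠ ∅) (x : V) :
    killR G R u i x = ∅ ↔ (x = u ∨ R x = ∅) := by
  unfold killR
  by_cases hx : x = u
  · simp [hx]
  · rw [if_neg hx]
    by_cases ha : G.Adj u x
    · rw [if_pos ha]
      constructor
      · intro h
        by_contra hc
        push_neg at hc
        exact hs x ha hc.2.ne_empty h
      · rintro (h | h)
        · exact absurd h hx
        · rw [h]; simp
    · simp [ha, hx]

lemma alv_kill {R : V → Finset (Fin q)} {u : V} {i : Fin q}
    (hs : ∀ x, G.Adj u x → R x ≠ ∅ → (R x).erase i ≠ ∅) :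
    alv (killR G R u i) = (alv R).erase u := by
  ext x
  have hiff := killR_empty_iff G hs x
  simp only [mem_alv, Finset.mem_erase]
  tauto

lemma S_killR_subset (R : V → Finset (Fin q)) (u : V) (i : Fin q) :
    S (killR G R u i) ⊆ S R := by
  intro ⟨x, j⟩
  simp only [mem_S, killR]
  by_cases hx : x = u
  · simp [hx]
  · rw [if_neg hx]
    by_cases ha : G.Adj u x
    · rw [if_pos ha]
      exact fun h => Finset.mem_of_mem_erase h
    · rw [if_neg ha]; exact id

lemma S_killR_card {R : V → Finset (Fin q)} {u : V} {i : Fin q} (hu : R u ≠ ∅) :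
    (S (killR G R u i)).card < (S R).card := by
  apply Finset.card_lt_card
  rw [Finset.ssubset_iff_of_subset (S_killR_subset G R u i)]
  obtain ⟨j, hj⟩ := Finset.nonempty_iff_ne_empty.2 hu
  refine ⟨(u, j), by simpa using hj, ?_⟩
  simp [killR]

lemma exists_coloring (hq : ∀ u : V, G.degree u < q) :
    ∃ c : V → Fin q, ∀ u x, G.Adj u x → c u ≠ c x := by
  have hq0 : ∀ u : V, (0 : ℕ) < q := fun u => Nat.lt_of_le_of_lt (Nat.zero_le _) (hq u)
  suffices h : ∀ s : Finset V, ∃ c : V → Fin q, ∀ u ∈ s, ∀ x ∈ s, G.Adj u x → c u ≠ c x by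
    obtain ⟨c, hc⟩ := h Finset.univ
    exact ⟨c, fun u x ha => hc u (Finset.mem_univ u) x (Finset.mem_univ x) ha⟩
  intro s
  induction s using Finset.induction_on with
  | empty => exact ⟨fun u => ⟨0, hq0 u⟩, by simp⟩
  | @insert a s ha ih =>
    obtain ⟨c, hc⟩ := ih
    have hcard : ((G.neighborFinset a).image c).card < (Finset.univ : Finset (Fin q)).card := by
      have h1 : ((G.neighborFinset a).image c).card ≤ (G.neighborFinset a).card :=
        Finset.card_image_le
      have h2 : (G.neighborFinset a).card = G.degree a := rfl
      have h3 := hq a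
      have h4 : (Finset.univ : Finset (Fin q)).card = q := by
        rw [Finset.card_univ, Fintype.card_fin]
      omega
    have hav : ((Finset.univ : Finset (Fin q)) \ (G.neighborFinset a).image c).Nonempty := by
      rw [Finset.sdiff_nonempty]
      intro hsub
      exact absurd (Finset.card_le_card hsub) (by omega)
    obtain ⟨j, hj⟩ := hav
    have hj' : j ∉ (G.neighborFinset a).image c := (Finset.mem_sdiff.1 hj).2
    refine ⟨Function.update c a j, ?_⟩
    intro u hu x hx hadj
    rw [Finset.mem_insert] at hu hx
    rcases hu with hu | hu <;> rcases hx with hx | hx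
    · exact absurd hadj (by rw [hu, hx]; exact G.loopless.irrefl a)
    · have hxa : x ≠ a := fun h => ha (h ▸ hx)
      rw [hu, Function.update_self, Function.update_of_ne hxa]
      intro he
      have hax : G.Adj a x := hu ▸ hadj
      exact hj' (Finset.mem_image.2 ⟨x, by rwa [SimpleGraph.mem_neighborFinset], he.symm⟩)
    · have hua : u ≠ a := fun h => ha (h ▸ hu)
      rw [hx, Function.update_of_ne hua, Function.update_self]
      intro he
      have hau : G.Adj a u := (hx ▸ hadj).symm
      exact hj' (Finset.mem_image.2 ⟨u, by rwa [SimpleGraph.mem_neighborFinset], he⟩)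
    · have hxa : x ≠ a := fun h => ha (h ▸ hx)
      have hua : u ≠ a := fun h => ha (h ▸ hu)
      rw [Function.update_of_ne hua, Function.update_of_ne hxa]
      exact hc u hu x hx hadj

lemma killR_subset (R : V → Finset (Fin q)) (u : V) (i : Fin q) (x : V) :
    killR G R u i x ⊆ R x := by
  unfold killR
  by_cases hx : x = u
  · rw [if_pos hx]; exact Finset.empty_subset _
  · rw [if_neg hx]
    by_cases ha : G.Adj u x
    · rw [if_pos ha]; exact Finset.erase_subset _ _
    · rw [if_neg ha]

lemma killR_ne_imp {R : V → Finset (Fin q)} {u : V} {i : Fin q} {x : V}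
    (h : killR G R u i x ≠ ∅) : R x ≠ ∅ := by
  intro h0
  apply h
  have hs := killR_subset G R u i x
  rw [h0] at hs
  exact Finset.subset_empty.1 hs

lemma INV2_mono {R R' : V → Finset (Fin q)} {c : V → Fin q}
    (hsub : ∀ x, R' x ⊆ R x) (h1 : ∀ x, R' x ≠ ∅ → c x ∈ R' x) (h2 : INV2 G R c) :
    INV2 G R' c := by
  have hne : ∀ x, R' x ≠ ∅ → R x ≠ ∅ := by
    intro x hx h0
    apply hx
    have := hsub x
    rw [h0] at this
    exact Finset.subset_empty.1 this
  exact ⟨h1, fun u x ha hu hx hc =>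
    h2.2 u x ha (hne u hu) (hne x hx) (hsub u hc)⟩

lemma phase2 : ∀ (n : ℕ) (R : V → Finset (Fin q)) (c : V → Fin q),
    (S R).card ≤ n → INV2 G R c →
    (G □ (⊤ : SimpleGraph (Fin q))).VD (S R) (alv R).card := by
  intro n
  induction n with
  | zero =>
    intro R c hn _
    have hS : S R = ∅ := Finset.card_eq_zero.1 (Nat.le_zero.1 hn)
    have hA : alv R = ∅ := by
      rw [Finset.eq_empty_iff_forall_notMem]
      intro u hu
      rw [mem_alv] at hu
      obtain ⟨j, hj⟩ := Finset.nonempty_iff_ne_empty.2 hu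
      have hmem : ((u, j) : V × Fin q) ∈ S R := by simpa using hj
      rw [hS] at hmem
      simp at hmem
    rw [hA, hS]
    exact SimpleGraph.VD.zero ∅
  | succ n ih =>
    intro R c hn h2
    by_cases hbig : ∃ u, 2 ≤ (R u).card
    · obtain ⟨u, hu2⟩ := hbig
      have hune : R u ≠ ∅ := by
        intro h0; rw [h0] at hu2; simp at hu2
      have hcu : c u ∈ R u := h2.1 u hune
      have hne : ((R u).erase (c u)).Nonempty := by
        rw [← Finset.card_pos, Finset.card_erase_of_mem hcu]; omega
      obtain ⟨i, hi⟩ := hne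
      have hiRu : i ∈ R u := Finset.mem_of_mem_erase hi
      have hicu : i ≠ c u := Finset.ne_of_mem_erase hi
      have hcxi : ∀ x, G.Adj u x → R x ≠ ∅ → c x ≠ i := by
        intro x hax hx h
        exact h2.2 u x hax hune hx (h.symm ▸ hiRu)
      have hsurv : ∀ x, G.Adj u x → R x ≠ ∅ → (R x).erase i ≠ ∅ := by
        intro x hax hx h0
        have hmem : c x ∈ (R x).erase i :=
          Finset.mem_erase.2 ⟨hcxi x hax hx, h2.1 x hx⟩
        rw [h0] at hmem
        simp at hmem
      have hualv : u ∈ alv R := mem_alv.2 hune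
      obtain ⟨k, hk⟩ : ∃ k, (alv R).card = k + 1 := by
        refine ⟨(alv R).card - 1, ?_⟩
        have := Finset.card_pos.2 ⟨u, hualv⟩
        omega
      have huS : ((u, i) : V × Fin q) ∈ S R := by simpa using hiRu
      rw [hk]
      refine SimpleGraph.VD.step _ k (u, i) huS ?_ ?_
      · -- erase branch
        rw [S_erase]
        have heraseu : (R u).erase i ≠ ∅ := by
          intro h0
          have hc0 : ((R u).erase i).card = 0 := by rw [h0]; rfl
          rw [Finset.card_erase_of_mem hiRu] at hc0
          omega
        have hcard : (S (Function.update R u ((R u).erase i))).card ≤ n := by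
          rw [← S_erase, Finset.card_erase_of_mem huS]
          omega
        have hinv : INV2 G (Function.update R u ((R u).erase i)) c := by
          apply INV2_mono G (c := c) ?_ ?_ h2
          · intro x
            by_cases hx : x = u
            · subst hx; rw [Function.update_self]; exact Finset.erase_subset _ _
            · rw [Function.update_of_ne hx]
          · intro x hx
            by_cases hxu : x = u
            · subst hxu
              rw [Function.update_self]
              exact Finset.mem_erase.2 ⟨fun h => hicu h.symm, hcu⟩
            · rw [Function.update_of_ne hxu]
              apply h2.1
              rwa [Function.update_of_ne hxu] at hx
        have hres := ih _ c hcard hinv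
        rwa [alv_update heraseu, hk] at hres
      · -- kill branch
        rw [S_sdiff]
        have hcard : (S (killR G R u i)).card ≤ n := by
          have := S_killR_card G (i := i) hune
          omega
        have hinv : INV2 G (killR G R u i) c := by
          refine INV2_mono G (killR_subset G R u i) ?_ h2
          intro x hx
          have hRx : R x ≠ ∅ := killR_ne_imp G hx
          unfold killR at hx ⊢
          by_cases hxu : x = u
          · rw [if_pos hxu] at hx; simp at hx
          · rw [if_neg hxu] at hx ⊢
            by_cases ha : G.Adj u x
            · rw [if_pos ha]
              exact Finset.mem_erase.2 ⟨hcxi x ha hRx, h2.1 x hRx⟩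
            · rw [if_neg ha]
              exact h2.1 x hRx
        have hres := ih _ c hcard hinv
        rw [alv_kill G hsurv] at hres
        have hck : ((alv R).erase u).card = k := by
          rw [Finset.card_erase_of_mem hualv, hk]
          omega
        rwa [hck] at hres
    · -- base : all columns singletons
      push_neg at hbig
      have hsingle : ∀ x, R x ≠ ∅ → R x = {c x} := by
        intro x hx
        refine (Finset.eq_of_subset_of_card_le ?_ ?_).symm
        · exact Finset.singleton_subset_iff.2 (h2.1 x hx)
        · have := hbig x
          simp only [Finset.card_singleton]
          omega
      have hSimage : S R = (alv R).image (fun u => (u, c u)) := by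
        ext ⟨x, j⟩
        simp only [mem_S, Finset.mem_image, mem_alv]
        constructor
        · intro hj
          have hx : R x ≠ ∅ := by
            intro h0; rw [h0] at hj; simp at hj
          refine ⟨x, hx, ?_⟩
          rw [hsingle x hx] at hj
          simp only [Finset.mem_singleton] at hj
          rw [hj]
        · rintro ⟨y, hy, heq⟩
          have h1 : y = x := congrArg Prod.fst heq
          subst h1
          have hcc : c y = j := congrArg Prod.snd heq
          rw [← hcc]
          exact h2.1 y hy
      rw [hSimage]
      refine SimpleGraph.VD.edgeless _ _
        (Finset.card_image_of_injective _ (fun a b h => congrArg Prod.fst h)) ?_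
      intro p hp p' hp' hadj
      simp only [Finset.mem_image, mem_alv] at hp hp'
      obtain ⟨x, hx, rfl⟩ := hp
      obtain ⟨y, hy, rfl⟩ := hp'
      rw [prod_adj] at hadj
      rcases hadj with ⟨haxy, hcxy⟩ | ⟨hcne, hxy⟩
      · have hcxy' : c x = c y := hcxy
        have haxy' : G.Adj x y := haxy
        exact h2.2 x y haxy' hx hy (hcxy' ▸ h2.1 x hx)
      · have hxy' : x = y := hxy
        exact hcne (congrArg c hxy')

lemma sub_card {α : Type*} [DecidableEq α] (s t w : Finset α) (h : s \ t ⊆ w) :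
    s.card ≤ w.card + t.card := by
  have h1 : s ⊆ (s \ t) ∪ t := by
    intro a ha
    by_cases hat : a ∈ t
    · exact Finset.mem_union.2 (Or.inr hat)
    · exact Finset.mem_union.2 (Or.inl (Finset.mem_sdiff.2 ⟨ha, hat⟩))
  calc s.card ≤ ((s \ t) ∪ t).card := Finset.card_le_card h1
    _ ≤ (s \ t).card + t.card := Finset.card_union_le _ _
    _ ≤ w.card + t.card := by
        have := Finset.card_le_card h
        omega

lemma dist_two {y x0 u : V} (hyx : G.Adj y x0) (hxu : G.Adj x0 u)
    (hyu : y ≠ u) (hnadj : ¬ G.Adj y u) : G.dist y u = 2 := by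
  have hw : G.dist y u ≤ 2 := by
    have := SimpleGraph.dist_le (SimpleGraph.Walk.cons hyx (SimpleGraph.Walk.cons hxu SimpleGraph.Walk.nil))
    simpa using this
  have h0 : G.dist y u ≠ 0 := by
    intro h
    rcases SimpleGraph.dist_eq_zero_iff_eq_or_not_reachable.1 h with h' | h'
    · exact hyu h'
    · exact h' ⟨SimpleGraph.Walk.cons hyx (SimpleGraph.Walk.cons hxu SimpleGraph.Walk.nil)⟩
  have h1 : G.dist y u ≠ 1 := fun h => hnadj (SimpleGraph.dist_eq_one_iff_adj.1 h)
  omega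

lemma phase1 (hd : HD G q) : ∀ (n : ℕ) (R : V → Finset (Fin q)) (c : V → Fin q),
    (S R).card ≤ n → INV1 G R c →
    (G □ (⊤ : SimpleGraph (Fin q))).VD (S R) (alv R).card := by
  intro n
  induction n with
  | zero =>
    intro R c hn _
    have hS : S R = ∅ := Finset.card_eq_zero.1 (Nat.le_zero.1 hn)
    have hA : alv R = ∅ := by
      rw [Finset.eq_empty_iff_forall_notMem]
      intro u hu
      rw [mem_alv] at hu
      obtain ⟨j, hj⟩ := Finset.nonempty_iff_ne_empty.2 hu
      have hmem : ((u, j) : V × Fin q) ∈ S R := by simpa using hj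
      rw [hS] at hmem
      simp at hmem
    rw [hA, hS]
    exact SimpleGraph.VD.zero ∅
  | succ n ih =>
    intro R c hn h1
    by_cases hconf : ∃ u z, G.Adj u z ∧ R u ≠ ∅ ∧ R z ≠ ∅ ∧ c z ∈ R u
    · obtain ⟨u, z, huz, hune, hzne, hcz⟩ := hconf
      set i := c z with hidef
      have hbigall : ∀ x, R x ≠ ∅ → (aN G R x).card + 1 ≤ (R x).card :=
        fun x hx => big G hd h1 hx
      have huaN : ∀ x, G.Adj u x → R x ≠ ∅ → u ∈ aN G R x := by
        intro x hax hx
        simp only [aN, Finset.mem_filter, SimpleGraph.mem_neighborFinset]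
        exact ⟨hax.symm, hune⟩
      have hRx2 : ∀ x, G.Adj u x → R x ≠ ∅ → 2 ≤ (R x).card := by
        intro x hax hx
        have h1' := hbigall x hx
        have h2' := Finset.card_pos.2 ⟨u, huaN x hax hx⟩
        omega
      have hsurv : ∀ x, G.Adj u x → R x ≠ ∅ → (R x).erase i ≠ ∅ := by
        intro x hax hx h0
        have hc2 := hRx2 x hax hx
        have := Finset.card_erase_of_mem (s := R x) (a := i)
        by_cases hmem : i ∈ R x
        · have hcc : ((R x).erase i).card = (R x).card - 1 := Finset.card_erase_of_mem hmem
          rw [h0] at hcc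
          simp at hcc
          omega
        · rw [Finset.erase_eq_of_notMem hmem] at h0
          exact hx h0
      have hcu : c u ∈ R u := h1.1 u hune
      have hicu : i ≠ c u := (h1.2.1 u z huz hune hzne).symm
      have hualv : u ∈ alv R := mem_alv.2 hune
      obtain ⟨k, hk⟩ : ∃ k, (alv R).card = k + 1 := by
        refine ⟨(alv R).card - 1, ?_⟩
        have := Finset.card_pos.2 ⟨u, hualv⟩
        omega
      have huS : ((u, i) : V × Fin q) ∈ S R := by simpa using hcz
      rw [hk]
      refine SimpleGraph.VD.step _ k (u, i) huS ?_ ?_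
      · -- ===== erase branch =====
        rw [S_erase]
        have heraseu : (R u).erase i ≠ ∅ := by
          intro h0
          have hmem : c u ∈ (R u).erase i := Finset.mem_erase.2 ⟨fun h => hicu h.symm, hcu⟩
          rw [h0] at hmem
          simp at hmem
        have hcard : (S (Function.update R u ((R u).erase i))).card ≤ n := by
          rw [← S_erase, Finset.card_erase_of_mem huS]
          omega
        set R1 := Function.update R u ((R u).erase i) with hR1
        have hemp1 : ∀ x, R1 x = ∅ ↔ R x = ∅ := by
          intro x
          by_cases hx : x = u
          · subst hx
            rw [hR1, Function.update_self]
            constructor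
            · intro h0; exact absurd h0 heraseu
            · intro h0; exact absurd h0 hune
          · rw [hR1, Function.update_of_ne hx]
        have hR1sub : ∀ x, R1 x ⊆ R x := by
          intro x
          by_cases hx : x = u
          · subst hx; rw [hR1, Function.update_self]; exact Finset.erase_subset _ _
          · rw [hR1, Function.update_of_ne hx]
        have hinv : INV1 G R1 c := by
          refine ⟨?_, ?_, ?_⟩
          · intro x hx
            by_cases hxu : x = u
            · subst hxu
              rw [hR1, Function.update_self]
              exact Finset.mem_erase.2 ⟨fun h => hicu h.symm, hcu⟩
            · rw [hR1, Function.update_of_ne hxu]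
              exact h1.1 x (fun h0 => hx ((hemp1 x).2 h0))
          · intro x y ha hx hy
            exact h1.2.1 x y ha (fun h0 => hx ((hemp1 x).2 h0)) (fun h0 => hy ((hemp1 y).2 h0))
          · intro y hy
            have hyR : R y ≠ ∅ := fun h0 => hy ((hemp1 y).2 h0)
            have hdN : dN G R1 y = dN G R y := by
              ext x'
              simp only [dN, Finset.mem_filter, hemp1 x']
            have hd2N : d2N G R1 y = d2N G R y := by
              ext x'
              simp only [d2N, Finset.mem_filter, hemp1 x']
            have haN : aN G R1 y = aN G R y := by
              ext x'
              simp only [aN, Finset.mem_filter, ne_eq, hemp1 x']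
            by_cases hyu : y = u
            · subst hyu
              have hRy1 : R1 y = (R y).erase i := by rw [hR1, Function.update_self]
              have hcard1 : (R1 y).card = (R y).card - 1 := by
                rw [hRy1, Finset.card_erase_of_mem hcz]
              have hchsub : insert i (chS G R c y) ⊆ chS G R1 c y := by
                intro r hr
                rcases Finset.mem_insert.1 hr with rfl | hr
                · refine Finset.mem_sdiff.2 ⟨?_, ?_⟩
                  · rw [haN]
                    exact Finset.mem_image.2 ⟨z, Finset.mem_filter.2
                      ⟨SimpleGraph.mem_neighborFinset _ _ _ |>.2 huz, hzne⟩, rfl⟩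
                  · rw [hRy1]
                    simp
                · have hr' := Finset.mem_sdiff.1 hr
                  refine Finset.mem_sdiff.2 ⟨by rw [haN]; exact hr'.1, ?_⟩
                  intro hmem
                  exact hr'.2 (hR1sub y hmem)
              have hchcard : (chS G R c y).card + 1 ≤ (chS G R1 c y).card := by
                have h1' := Finset.card_le_card hchsub
                rw [Finset.card_insert_of_notMem (by
                  intro hmem
                  exact (Finset.mem_sdiff.1 hmem).2 hcz)] at h1'
                omega
              have hold := h1.2.2 y hyR
              have hRyc := Finset.card_pos.2 (Finset.nonempty_iff_ne_empty.2 hyR)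
              rw [hdN, hd2N, hcard1]
              omega
            · have hRy1 : R1 y = R y := by rw [hR1, Function.update_of_ne hyu]
              have hch : chS G R1 c y = chS G R c y := by
                rw [chS, chS, haN, hRy1]
              rw [hdN, hd2N, hRy1, hch]
              exact h1.2.2 y hyR
        have hres := ih R1 c hcard hinv
        have halv : alv R1 = alv R := by
          ext x
          simp only [mem_alv, ne_eq, hemp1 x]
        rwa [halv, hk] at hres
      · -- ===== kill branch =====
        rw [S_sdiff]
        set R2 := killR G R u i with hR2
        have hcard : (S R2).card ≤ n := by
          have hlt := S_killR_card G (i := i) hune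
          rw [← hR2] at hlt
          omega
        have hemp2 : ∀ x, R2 x = ∅ ↔ (x = u ∨ R x = ∅) := killR_empty_iff G hsurv
        have haN2 : ∀ x, aN G R2 x = (aN G R x).erase u := by
          intro x
          ext x'
          simp only [aN, Finset.mem_filter, Finset.mem_erase]
          constructor
          · rintro ⟨hn', hne'⟩
            rw [ne_eq, hemp2 x'] at hne'
            push_neg at hne'
            exact ⟨hne'.1, hn', hne'.2.ne_empty⟩
          · rintro ⟨hxu, hn', hne'⟩
            refine ⟨hn', ?_⟩
            rw [ne_eq, hemp2 x']
            push_neg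
            exact ⟨hxu, Finset.nonempty_iff_ne_empty.2 hne'⟩
        -- recoloring
        have hpick : ∀ x, G.Adj u x → R x ≠ ∅ → c x = i →
            ∃ j, j ∈ R2 x ∧ j ∉ (aN G R2 x).image c := by
          intro x hax hx hcx
          have hxu : x ≠ u := fun h => G.loopless.irrefl u (h ▸ hax)
          have hR2x : R2 x = (R x).erase i := by
            rw [hR2, killR, if_neg hxu, if_pos hax]
          have hcard2 : (R2 x).card = (R x).card - 1 := by
            rw [hR2x, Finset.card_erase_of_mem (hcx ▸ h1.1 x hx)]
          have haNc : ((aN G R2 x).image c).card ≤ (aN G R x).card - 1 := by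
            have h1' : ((aN G R2 x).image c).card ≤ (aN G R2 x).card := Finset.card_image_le
            have h2' : (aN G R2 x).card = (aN G R x).card - 1 := by
              rw [haN2 x, Finset.card_erase_of_mem (huaN x hax hx)]
            omega
          have hbig' := hbigall x hx
          have haNpos := Finset.card_pos.2 ⟨u, huaN x hax hx⟩
          by_contra hcon
          push_neg at hcon
          have hsub : R2 x ⊆ (aN G R2 x).image c := fun j hj => hcon j hj
          have := Finset.card_le_card hsub
          omega
        set c' : V → Fin q := fun x =>
          if h : G.Adj u x ∧ R x ≠ ∅ ∧ c x = i then
            Classical.choose (hpick x h.1 h.2.1 h.2.2) else c x with hc'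
        have hc'unrec : ∀ x, ¬(G.Adj u x ∧ R x ≠ ∅ ∧ c x = i) → c' x = c x := by
          intro x hx
          rw [hc']
          exact dif_neg hx
        have hc'rec : ∀ x (h : G.Adj u x ∧ R x ≠ ∅ ∧ c x = i),
            c' x ∈ R2 x ∧ c' x ∉ (aN G R2 x).image c := by
          intro x h
          have : c' x = Classical.choose (hpick x h.1 h.2.1 h.2.2) := by
            rw [hc']
            exact dif_pos h
          rw [this]
          exact Classical.choose_spec (hpick x h.1 h.2.1 h.2.2)
        have halive2 : ∀ y, R2 y ≠ ∅ → (y ≠ u ∧ R y ≠ ∅) := by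
          intro y hy
          rw [ne_eq, hemp2 y] at hy
          push_neg at hy
          exact ⟨hy.1, hy.2.ne_empty⟩
        have hinv : INV1 G R2 c' := by
          refine ⟨?_, ?_, ?_⟩
          · -- (1) colors in lists
            intro y hy
            obtain ⟨hyu, hyR⟩ := halive2 y hy
            by_cases hrec : G.Adj u y ∧ R y ≠ ∅ ∧ c y = i
            · exact (hc'rec y hrec).1
            · rw [hc'unrec y hrec]
              by_cases hay : G.Adj u y
              · have hcyi : c y ≠ i := fun h => hrec ⟨hay, hyR, h⟩
                have : R2 y = (R y).erase i := by rw [hR2, killR, if_neg hyu, if_pos hay]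
                rw [this]
                exact Finset.mem_erase.2 ⟨hcyi, h1.1 y hyR⟩
              · have : R2 y = R y := by rw [hR2, killR, if_neg hyu, if_neg hay]
                rw [this]
                exact h1.1 y hyR
          · -- (2) properness
            intro x y ha hx hy
            obtain ⟨hxu, hxR⟩ := halive2 x hx
            obtain ⟨hyu, hyR⟩ := halive2 y hy
            by_cases hrx : G.Adj u x ∧ R x ≠ ∅ ∧ c x = i <;>
              by_cases hry : G.Adj u y ∧ R y ≠ ∅ ∧ c y = i
            · exact absurd (hrx.2.2.trans hry.2.2.symm) (h1.2.1 x y ha hxR hyR)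
            · rw [hc'unrec y hry]
              intro heq
              apply (hc'rec x hrx).2
              rw [heq]
              exact Finset.mem_image.2 ⟨y, Finset.mem_filter.2
                ⟨SimpleGraph.mem_neighborFinset _ _ _ |>.2 ha, hy⟩, rfl⟩
            · rw [hc'unrec x hrx]
              intro heq
              apply (hc'rec y hry).2
              rw [← heq]
              exact Finset.mem_image.2 ⟨x, Finset.mem_filter.2
                ⟨SimpleGraph.mem_neighborFinset _ _ _ |>.2 ha.symm, hx⟩, rfl⟩
            · rw [hc'unrec x hrx, hc'unrec y hry]
              exact h1.2.1 x y ha hxR hyR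
          · -- (3) counting
            intro y hy
            obtain ⟨hyu, hyR⟩ := halive2 y hy
            have hold := h1.2.2 y hyR
            have hd2sub : d2N G R y ⊆ d2N G R2 y := by
              intro x' hx'
              simp only [d2N, Finset.mem_filter] at hx' ⊢
              refine ⟨hx'.1, ?_⟩
              rw [hemp2 x']
              exact Or.inr hx'.2
            by_cases hay : G.Adj u y
            · -- case A : y is a neighbour of the killed column
              have hR2y : R2 y = (R y).erase i := by
                rw [hR2, killR, if_neg hyu, if_pos hay]
              have hdN2 : dN G R2 y = insert u (dN G R y) := by
                ext x'
                simp only [dN, Finset.mem_filter, Finset.mem_insert]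
                constructor
                · rintro ⟨hn', he'⟩
                  rcases (hemp2 x').1 he' with rfl | he''
                  · exact Or.inl rfl
                  · exact Or.inr ⟨hn', he''⟩
                · rintro (rfl | ⟨hn', he'⟩)
                  · exact ⟨SimpleGraph.mem_neighborFinset _ _ _ |>.2 hay.symm, (hemp2 _).2 (Or.inl rfl)⟩
                  · exact ⟨hn', (hemp2 x').2 (Or.inr he')⟩
              have hdN2c : (dN G R2 y).card = (dN G R y).card + 1 := by
                rw [hdN2, Finset.card_insert_of_notMem]
                intro hmem
                simp only [dN, Finset.mem_filter] at hmem
                exact hune hmem.2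
              have hchsub : ∀ r ∈ chS G R c y, r ≠ c u → r ≠ i → r ∈ chS G R2 c' y := by
                intro r hr hrcu hri
                obtain ⟨hrim, hrR⟩ := Finset.mem_sdiff.1 hr
                obtain ⟨x0, hx0, hcx0⟩ := Finset.mem_image.1 hrim
                obtain ⟨hx0n, hx0R⟩ := Finset.mem_filter.1 hx0
                have hx0u : x0 ≠ u := fun h => hrcu (by rw [← hcx0, h])
                have hx0rec : ¬(G.Adj u x0 ∧ R x0 ≠ ∅ ∧ c x0 = i) := by
                  rintro ⟨-, -, h⟩
                  exact hri (by rw [← hcx0, h])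
                refine Finset.mem_sdiff.2 ⟨?_, ?_⟩
                · refine Finset.mem_image.2 ⟨x0, ?_, by rw [hc'unrec x0 hx0rec]; exact hcx0⟩
                  refine Finset.mem_filter.2 ⟨hx0n, ?_⟩
                  rw [ne_eq, hemp2 x0]
                  push_neg
                  exact ⟨hx0u, Finset.nonempty_iff_ne_empty.2 hx0R⟩
                · intro hmem
                  exact hrR (Finset.mem_of_mem_erase (hR2y ▸ hmem))
              by_cases hiy : i ∈ R y
              · have hm2 : (R2 y).card = (R y).card - 1 := by
                  rw [hR2y, Finset.card_erase_of_mem hiy]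
                have hchb : (chS G R c y).card ≤ (chS G R2 c' y).card + 1 := by
                  have hsub' : chS G R c y \ {c u} ⊆ chS G R2 c' y := by
                    intro r hr
                    obtain ⟨hr1, hr2⟩ := Finset.mem_sdiff.1 hr
                    simp only [Finset.mem_singleton] at hr2
                    refine hchsub r hr1 hr2 ?_
                    intro hri
                    exact (Finset.mem_sdiff.1 hr1).2 (hri ▸ hiy)
                  have := sub_card _ _ _ hsub'
                  simpa using this
                have hd2c := Finset.card_le_card hd2sub
                have hRyc := Finset.card_pos.2 (Finset.nonempty_iff_ne_empty.2 hyR)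
                omega
              · have hm2 : (R2 y).card = (R y).card := by
                  rw [hR2y, Finset.erase_eq_of_notMem hiy]
                have hchb : (chS G R c y).card ≤ (chS G R2 c' y).card + 2 := by
                  have hsub' : chS G R c y \ {c u, i} ⊆ chS G R2 c' y := by
                    intro r hr
                    obtain ⟨hr1, hr2⟩ := Finset.mem_sdiff.1 hr
                    simp only [Finset.mem_insert, Finset.mem_singleton] at hr2
                    push_neg at hr2
                    exact hchsub r hr1 hr2.1 hr2.2
                  have := sub_card _ _ _ hsub'
                  have hle : ({c u, i} : Finset (Fin q)).card ≤ 2 :=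
                    Finset.card_insert_le _ _ |>.trans (by simp)
                  omega
                have hd2c := Finset.card_le_card hd2sub
                omega
            · -- case B/C : y is not a neighbour of u
              have hR2y : R2 y = R y := by
                rw [hR2, killR, if_neg hyu, if_neg hay]
              have hdN2 : dN G R2 y = dN G R y := by
                ext x'
                simp only [dN, Finset.mem_filter]
                constructor
                · rintro ⟨hn', he'⟩
                  rcases (hemp2 x').1 he' with rfl | he''
                  · exact absurd ((SimpleGraph.mem_neighborFinset _ _ _).1 hn').symm hay
                  · exact ⟨hn', he''⟩
                · rintro ⟨hn', he'⟩
                  exact ⟨hn', (hemp2 x').2 (Or.inr he')⟩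
              have hchsub : ∀ r ∈ chS G R c y, r ≠ i → r ∈ chS G R2 c' y := by
                intro r hr hri
                obtain ⟨hrim, hrR⟩ := Finset.mem_sdiff.1 hr
                obtain ⟨x0, hx0, hcx0⟩ := Finset.mem_image.1 hrim
                obtain ⟨hx0n, hx0R⟩ := Finset.mem_filter.1 hx0
                have hx0u : x0 ≠ u := by
                  intro h
                  exact hay (by
                    have := (SimpleGraph.mem_neighborFinset _ _ _).1 hx0n
                    rw [h] at this
                    exact this.symm)
                have hx0rec : ¬(G.Adj u x0 ∧ R x0 ≠ ∅ ∧ c x0 = i) := by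
                  rintro ⟨-, -, h⟩
                  exact hri (by rw [← hcx0, h])
                refine Finset.mem_sdiff.2 ⟨?_, ?_⟩
                · refine Finset.mem_image.2 ⟨x0, ?_, by rw [hc'unrec x0 hx0rec]; exact hcx0⟩
                  refine Finset.mem_filter.2 ⟨hx0n, ?_⟩
                  rw [ne_eq, hemp2 x0]
                  push_neg
                  exact ⟨hx0u, Finset.nonempty_iff_ne_empty.2 hx0R⟩
                · rw [hR2y]
                  exact hrR
              by_cases hrecnb : ∃ x0, x0 ∈ aN G R y ∧ G.Adj u x0 ∧ c x0 = i
              · -- case B : some neighbour gets recoloured, u is at distance two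
                obtain ⟨x0, hx0, hax0, hcx0⟩ := hrecnb
                obtain ⟨hx0n, hx0R⟩ := Finset.mem_filter.1 hx0
                have hd2' : insert u (d2N G R y) ⊆ d2N G R2 y := by
                  intro x' hx'
                  rcases Finset.mem_insert.1 hx' with rfl | hx''
                  · simp only [d2N, Finset.mem_filter, Finset.mem_univ, true_and]
                    refine ⟨?_, (hemp2 _).2 (Or.inl rfl)⟩
                    exact dist_two G ((SimpleGraph.mem_neighborFinset _ _ _).1 hx0n) hax0.symm
                      hyu (fun h => hay h.symm)
                  · exact hd2sub hx''
                have hd2c : (d2N G R y).card + 1 ≤ (d2N G R2 y).card := by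
                  have h1' := Finset.card_le_card hd2'
                  rw [Finset.card_insert_of_notMem (by
                    simp only [d2N, Finset.mem_filter]
                    rintro ⟨-, h⟩
                    exact hune h)] at h1'
                  omega
                have hchb : (chS G R c y).card ≤ (chS G R2 c' y).card + 1 := by
                  have hsub' : chS G R c y \ {i} ⊆ chS G R2 c' y := by
                    intro r hr
                    obtain ⟨hr1, hr2⟩ := Finset.mem_sdiff.1 hr
                    simp only [Finset.mem_singleton] at hr2
                    exact hchsub r hr1 hr2
                  have := sub_card _ _ _ hsub'
                  simpa using this
                rw [hR2y, hdN2]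
                omega
              · -- case C : nothing changes around y
                push_neg at hrecnb
                have hchsub' : chS G R c y ⊆ chS G R2 c' y := by
                  intro r hr
                  obtain ⟨hrim, hrR⟩ := Finset.mem_sdiff.1 hr
                  obtain ⟨x0, hx0, hcx0⟩ := Finset.mem_image.1 hrim
                  obtain ⟨hx0n, hx0R⟩ := Finset.mem_filter.1 hx0
                  have hx0u : x0 ≠ u := by
                    intro h
                    exact hay (by
                      have := (SimpleGraph.mem_neighborFinset _ _ _).1 hx0n
                      rw [h] at this
                      exact this.symm)
                  have hx0rec : ¬(G.Adj u x0 ∧ R x0 ≠ ∅ ∧ c x0 = i) := by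
                    rintro ⟨ha', -, h⟩
                    exact hrecnb x0 hx0 ha' h
                  refine Finset.mem_sdiff.2 ⟨?_, ?_⟩
                  · refine Finset.mem_image.2 ⟨x0, ?_, by rw [hc'unrec x0 hx0rec]; exact hcx0⟩
                    refine Finset.mem_filter.2 ⟨hx0n, ?_⟩
                    rw [ne_eq, hemp2 x0]
                    push_neg
                    exact ⟨hx0u, Finset.nonempty_iff_ne_empty.2 hx0R⟩
                  · rw [hR2y]
                    exact hrR
                have hchc := Finset.card_le_card hchsub'
                have hd2c := Finset.card_le_card hd2sub
                rw [hR2y, hdN2]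
                omega
        have hres := ih R2 c' hcard hinv
        rw [alv_kill G hsurv] at hres
        have hck : ((alv R).erase u).card = k := by
          rw [Finset.card_erase_of_mem hualv, hk]
          omega
        rwa [hck] at hres
    · -- no conflict : phase 2
      push_neg at hconf
      exact phase2 G (n + 1) R c hn ⟨h1.1, fun x y ha hx hy hc => hconf x y ha (Finset.nonempty_iff_ne_empty.2 hx) (Finset.nonempty_iff_ne_empty.2 hy) hc⟩

end VDP


/-- If `G` has `m` vertices and `q > |N²(v)| + 2|N(v)|` for every vertex `v`,
then `G □ K_q` is `VD_m`. -/
theorem vd_boxProd_of_degree_bound {V : Type*} [Fintype V] [DecidableEq V]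
    (G : SimpleGraph V) [DecidableRel G.Adj] (q : ℕ) (hq : 0 < q)
    (hdeg : ∀ v : V, ({u : V | G.dist v u = 2} : Set V).ncard + 2 * G.degree v < q) :
    (G □ (⊤ : SimpleGraph (Fin q))).VD Finset.univ (Fintype.card V) := by
  classical
  have hdlt : ∀ u : V, G.degree u < q := by
    intro u
    have := hdeg u
    omega
  obtain ⟨c, hc⟩ := VDP.exists_coloring G hdlt
  have hne : Nonempty (Fin q) := ⟨⟨0, hq⟩⟩
  have huniv : ((Finset.univ : Finset (Fin q))) ≠ ∅ := Finset.univ_nonempty.ne_empty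
  have hR0 : VDP.S (fun _ : V => (Finset.univ : Finset (Fin q))) =
      (Finset.univ : Finset (V × Fin q)) := by
    ext p
    simp
  have halv : VDP.alv (fun _ : V => (Finset.univ : Finset (Fin q))) =
      (Finset.univ : Finset V) := by
    ext u
    simpa using huniv
  have hinv : VDP.INV1 G (fun _ : V => (Finset.univ : Finset (Fin q))) c := by
    refine ⟨fun u _ => Finset.mem_univ _, fun u x ha _ _ => hc u x ha, fun u _ => ?_⟩
    have hcardq : ((fun _ : V => (Finset.univ : Finset (Fin q))) u).card = q := by
      simp
    omega
  have hres := VDP.phase1 G hdeg ((VDP.S (fun _ : V => (Finset.univ : Finset (Fin q)))).card)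
    (fun _ : V => (Finset.univ : Finset (Fin q))) c le_rfl hinv
  rw [hR0, halv, Finset.card_univ] at hres
  exact hres
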